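/- Up to isomorphism there are exactly three questions for the full two-peg Mastermind state with one additional color: for every integer n ≥ 2 and every q = (q₁,q₂) ∈ (Fin (n+1))² with (q₁,q₂) ≠ (n,n), there exist a permutation π of Fin (n+1) with π(n) = n (so π restricts to a permutation of the secret colors {0,…,n−1}) and a choice of whether to swap the two coordinates, such that the resulting image of q is one of (0,0), (0,1), or (0,n). -/
import Mathlib


/-- Up to isomorphism there are exactly three questions for the full two-peg
Mastermind state with one additional color: for every `n ≥ 2` and every
question `q ∈ (Fin (n+1))²` other than `(n,n)` (the pair of additional colors),
there are a permutation `π` of the `n+1` colors fixing the additional color `n`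
(hence restricting to a permutation of the secret colors `{0,…,n−1}`) and a
choice `swap` of whether to exchange the two peg positions, such that the
resulting image of `q` is one of `(0,0)`, `(0,1)`, `(0,n)`. -/
theorem mm2_three_nonisomorphic_questions (n : ℕ) (hn : 2 ≤ n)
    (q : Fin (n + 1) × Fin (n + 1)) (hq : q ≠ (Fin.last n, Fin.last n)) :
    ∃ (π : Equiv.Perm (Fin (n + 1))) (swap : Bool),
      π (Fin.last n) = Fin.last n ∧
      (fun t : Fin (n + 1) × Fin (n + 1) => (π t.1, π t.2))
          (if swap then (q.2, q.1) else q) ∈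
        ({((0 : Fin (n + 1)), (0 : Fin (n + 1))), (0, 1), (0, Fin.last n)} :
          Set (Fin (n + 1) × Fin (n + 1))) := by
  obtain ⟨a, b⟩ := q
  have h0 : (0 : Fin (n + 1)) ≠ Fin.last n := by
    simp [Fin.ext_iff, Fin.last]; omega
  have h1 : (1 : Fin (n + 1)) ≠ Fin.last n := by
    have : 1 % (n + 1) = 1 := Nat.mod_eq_of_lt (by omega)
    simp [Fin.ext_iff, Fin.last, Fin.val_one']; omega
  have h01 : (0 : Fin (n + 1)) ≠ 1 := by
    simp [Fin.ext_iff, Fin.val_one]; omega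
  by_cases ha : a = Fin.last n
  · have hb : b ≠ Fin.last n := fun h => hq (by simp [ha, h])
    refine ⟨Equiv.swap 0 b, true, ?_, ?_⟩
    · exact Equiv.swap_apply_of_ne_of_ne h0.symm (Ne.symm hb)
    · simp only [Set.mem_insert_iff, Set.mem_singleton_iff, Prod.mk.injEq]
      right; right
      constructor
      · simp [Equiv.swap_apply_right]
      · simp [ha, Equiv.swap_apply_of_ne_of_ne h0.symm (Ne.symm hb)]
  · by_cases hb : b = Fin.last n
    · refine ⟨Equiv.swap 0 a, false, ?_, ?_⟩
      · exact Equiv.swap_apply_of_ne_of_ne h0.symm (Ne.symm ha)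
      · simp only [Set.mem_insert_iff, Set.mem_singleton_iff, Prod.mk.injEq]
        right; right
        constructor
        · simp [Equiv.swap_apply_right]
        · simp [hb, Equiv.swap_apply_of_ne_of_ne h0.symm (Ne.symm ha)]
    · by_cases hab : a = b
      · refine ⟨Equiv.swap 0 a, false, ?_, ?_⟩
        · exact Equiv.swap_apply_of_ne_of_ne h0.symm (Ne.symm ha)
        · simp only [Set.mem_insert_iff, Set.mem_singleton_iff, Prod.mk.injEq]
          left
          simp [← hab, Equiv.swap_apply_right]
      · refine ⟨(Equiv.swap 0 a).trans (Equiv.swap (Equiv.swap 0 a b) 1), false,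
          ?_, ?_⟩ <;>
          set c : Fin (n + 1) := Equiv.swap 0 a b with hc
        · simp only [Equiv.trans_apply,
            Equiv.swap_apply_of_ne_of_ne h0.symm (Ne.symm ha)]
          apply Equiv.swap_apply_of_ne_of_ne
          · intro h
            exact hb ((Equiv.swap 0 a).injective (h.symm.trans
              (Equiv.swap_apply_of_ne_of_ne h0.symm (Ne.symm ha)).symm))
          · exact h1.symm
        · have hc0 : (0 : Fin (n + 1)) ≠ c := by
            intro h
            exact hab ((Equiv.swap 0 a).injective
              ((Equiv.swap_apply_right 0 a).trans h))
          simp only [Set.mem_insert_iff, Set.mem_singleton_iff, Prod.mk.injEq,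
            if_neg, Bool.false_eq_true, not_false_iff, if_false]
          right; left
          constructor
          · simp only [Equiv.trans_apply, Equiv.swap_apply_right]
            exact Equiv.swap_apply_of_ne_of_ne hc0 h01
          · simp only [Equiv.trans_apply, ← hc]
            exact Equiv.swap_apply_left c 1
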